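/- For 1 < c₀ ≤ 2, K₀ = √((2−c₀)/c₀), β(t) = (c₀K₀/2)(2πt+k), the function x(t) = t + (1/π) arccot(K₀ tanh(β(t))) has x′(t) = (2/c₀)(sinh²β(t) − (c₀−c₀²)/2)/(cosh²β(t)(1+K₀²tanh²β(t))) > 0 for all t. -/

import Mathlib

open Real

noncomputable def arccot (y : ℝ) : ℝ := π / 2 - Real.arctan y

lemma hasDerivAt_tanh' (x : ℝ) : HasDerivAt Real.tanh (1 / Real.cosh x ^ 2) x := by
  have h := (Real.hasDerivAt_sinh x).div (Real.hasDerivAt_cosh x) (Real.cosh_pos x).ne'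
  have he : Real.tanh = fun y => Real.sinh y / Real.cosh y := by
    funext y; exact Real.tanh_eq_sinh_div_cosh y
  rw [he]
  refine h.congr_deriv ?_
  field_simp
  nlinarith [Real.cosh_sq_sub_sinh_sq x]

theorem x_deriv_tanh_branch_positive (c₀ k : ℝ) (hc₀ : 1 < c₀) (hc₀' : c₀ ≤ 2)
    (K₀ : ℝ) (hK₀ : K₀ = Real.sqrt ((2 - c₀) / c₀))
    (β : ℝ → ℝ) (hβ : ∀ t, β t = (c₀ * K₀ / 2) * (2 * π * t + k))
    (x : ℝ → ℝ)
    (hx : ∀ t, x t = t + (1 / π) * arccot (K₀ * Real.tanh (β t))) :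
    ∀ t : ℝ,
      deriv x t =
        (2 / c₀) * (Real.sinh (β t) ^ 2 - (c₀ - c₀ ^ 2) / 2) /
          (Real.cosh (β t) ^ 2 * (1 + K₀ ^ 2 * Real.tanh (β t) ^ 2)) ∧
      deriv x t > 0 := by
  intro t
  have hc₀pos : (0:ℝ) < c₀ := by linarith
  have hK0sq : K₀ ^ 2 = (2 - c₀) / c₀ := by
    rw [hK₀, sq_sqrt]
    exact div_nonneg (by linarith) (by linarith)
  -- derivative of β
  have hβfun : β = fun s => (c₀ * K₀ / 2) * (2 * π * s + k) := funext hβ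
  have hβd : HasDerivAt β (c₀ * K₀ * π) t := by
    rw [hβfun]
    have h1 : HasDerivAt (fun s : ℝ => 2 * π * s + k) (2 * π) t := by
      simpa using ((hasDerivAt_id t).const_mul (2 * π)).add_const k
    have := h1.const_mul (c₀ * K₀ / 2)
    refine this.congr_deriv ?_; ring
  set b := β t with hb
  have hch := Real.cosh_pos b
  have hchne : Real.cosh b ≠ 0 := hch.ne'
  have htd : HasDerivAt (fun s => Real.tanh (β s))
      (1 / Real.cosh b ^ 2 * (c₀ * K₀ * π)) t :=
    (hasDerivAt_tanh' b).comp t hβd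
  have hud : HasDerivAt (fun s => K₀ * Real.tanh (β s))
      (K₀ * (1 / Real.cosh b ^ 2 * (c₀ * K₀ * π))) t := htd.const_mul K₀
  have had : HasDerivAt (fun s => Real.arctan (K₀ * Real.tanh (β s)))
      (1 / (1 + (K₀ * Real.tanh b) ^ 2) * (K₀ * (1 / Real.cosh b ^ 2 * (c₀ * K₀ * π)))) t :=
    (Real.hasDerivAt_arctan _).comp t hud
  have hxd : HasDerivAt x
      (1 + (1 / π) * (0 - 1 / (1 + (K₀ * Real.tanh b) ^ 2) *
        (K₀ * (1 / Real.cosh b ^ 2 * (c₀ * K₀ * π))))) t := by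
    have hxfun : x = fun s => s + (1 / π) * (π / 2 - Real.arctan (K₀ * Real.tanh (β s))) := by
      funext s; rw [hx s]; rfl
    rw [hxfun]
    exact (hasDerivAt_id t).add ((((hasDerivAt_const t (π/2)).sub had).const_mul (1/π)))
  have hD := hxd.deriv
  have hπ : (π:ℝ) ≠ 0 := Real.pi_ne_zero
  have hdenpos : 0 < 1 + (K₀ * Real.tanh b) ^ 2 := by positivity
  have htanh : Real.tanh b = Real.sinh b / Real.cosh b := Real.tanh_eq_sinh_div_cosh b
  have hcs : Real.cosh b ^ 2 = 1 + Real.sinh b ^ 2 := by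
    nlinarith [Real.cosh_sq_sub_sinh_sq b]
  set D := Real.cosh b ^ 2 * (1 + K₀ ^ 2 * Real.tanh b ^ 2) with hDdef
  have hDpos : 0 < D := by positivity
  have hDform : D = Real.cosh b ^ 2 + K₀ ^ 2 * Real.sinh b ^ 2 := by
    rw [hDdef, htanh]
    field_simp
  have hkey : (2 / c₀) * (Real.sinh b ^ 2 - (c₀ - c₀ ^ 2) / 2) = D - c₀ * K₀ ^ 2 := by
    rw [hDform, hcs, hK0sq]
    field_simp
    ring
  have heq : deriv x t =
      (2 / c₀) * (Real.sinh b ^ 2 - (c₀ - c₀ ^ 2) / 2) /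
        (Real.cosh b ^ 2 * (1 + K₀ ^ 2 * Real.tanh b ^ 2)) := by
    rw [hD, ← hDdef, hkey]
    have hD2 : D = (1 + (K₀ * Real.tanh b) ^ 2) * Real.cosh b ^ 2 := by
      rw [hDdef]; ring
    rw [hD2]
    field_simp
    ring
  refine ⟨heq, ?_⟩
  rw [heq]
  have hnum : 0 < Real.sinh b ^ 2 - (c₀ - c₀ ^ 2) / 2 := by
    nlinarith [sq_nonneg (Real.sinh b)]
  have hden : 0 < Real.cosh b ^ 2 * (1 + K₀ ^ 2 * Real.tanh b ^ 2) := by positivity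
  positivity
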